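/- Let p : ℝ → ℝ be continuous and 1-periodic with mean ⟨p⟩ := ∫₀¹ p(t) dt, let N be a positive integer, set ε := 1/N, and let ψ : [0,1] → ℝ be C¹. Then |∫₀¹ (p(x/ε) − ⟨p⟩) ψ(x) dx| ≤ ε · (∫₀¹ p(t)² dt)^{1/2} · (∫₀¹ ψ′(x)² dx)^{1/2}. -/

import Mathlib

open MeasureTheory Set intervalIntegral

lemma cs_interval {f h : ℝ → ℝ} {a b : ℝ} (hab : a ≤ b)
    (hf : ContinuousOn f (Icc a b)) (hh : ContinuousOn h (Icc a b)) :
    |∫ x in a..b, f x * h x| ≤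
      Real.sqrt (∫ x in a..b, f x ^ 2) * Real.sqrt (∫ x in a..b, h x ^ 2) := by
  have hmeas : MeasurableSet (Ioc a b) := measurableSet_Ioc
  have hsub : Ioc a b ⊆ Icc a b := Ioc_subset_Icc_self
  have memℒ2 : ∀ {u : ℝ → ℝ}, ContinuousOn u (Icc a b) →
      MemLp u (ENNReal.ofReal 2) (volume.restrict (Ioc a b)) := by
    intro u hu
    obtain ⟨C, hC⟩ := (isCompact_Icc).exists_bound_of_continuousOn hu
    have hmu : AEStronglyMeasurable u (volume.restrict (Ioc a b)) :=
      (hu.mono hsub).aestronglyMeasurable hmeas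
    have : MemLp u ⊤ (volume.restrict (Ioc a b)) := by
      apply memLp_top_of_bound hmu C
      filter_upwards [ae_restrict_mem hmeas] with x hx using hC x (hsub hx)
    exact this.mono_exponent le_top
  have key := integral_mul_norm_le_Lp_mul_Lq (μ := volume.restrict (Ioc a b))
    (Real.HolderConjugate.two_two : Real.HolderConjugate 2 2) (memℒ2 hf) (memℒ2 hh)
  rw [intervalIntegral.integral_of_le hab]
  rw [← Real.norm_eq_abs]
  calc ‖∫ x in Ioc a b, f x * h x‖ ≤ ∫ x in Ioc a b, ‖f x * h x‖ :=
        MeasureTheory.norm_integral_le_integral_norm _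
    _ = ∫ x in Ioc a b, ‖f x‖ * ‖h x‖ := by simp [abs_mul]
    _ ≤ (∫ x in Ioc a b, ‖f x‖ ^ (2:ℝ)) ^ ((1:ℝ)/2) *
        (∫ x in Ioc a b, ‖h x‖ ^ (2:ℝ)) ^ ((1:ℝ)/2) := key
    _ = Real.sqrt (∫ x in a..b, f x ^ 2) * Real.sqrt (∫ x in a..b, h x ^ 2) := by
        have e : ∀ u : ℝ → ℝ, (∫ x in Ioc a b, ‖u x‖ ^ (2:ℝ)) = ∫ x in a..b, u x ^ 2 := by
          intro u
          rw [intervalIntegral.integral_of_le hab]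
          congr 1; ext x
          rw [show ((2:ℝ)) = ((2:ℕ):ℝ) by norm_num, Real.rpow_natCast]
          exact sq_abs _
        rw [e f, e h, Real.sqrt_eq_rpow, Real.sqrt_eq_rpow]

/-- The oscillation-averaging estimate in the proof of Lemma 3.3 of the paper:
for a continuous `1`-periodic `p` with mean `⟨p⟩` and `ε = 1/N`, the pairing of
the oscillation `p(x/ε) − ⟨p⟩` against a `C¹` test function `ψ` on `[0,1]` is
of order `ε`. -/
theorem oscillation_averaging_estimate
    (p : ℝ → ℝ) (hp : Continuous p) (hper : ∀ t, p (t + 1) = p t)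
    (N : ℕ) (hN : 0 < N) (ε : ℝ) (hε : ε = 1 / (N : ℝ))
    (ψ : ℝ → ℝ) (hψ : ContDiffOn ℝ 1 ψ (Set.Icc (0:ℝ) 1)) :
    |∫ x in (0:ℝ)..1, (p (x / ε) - ∫ t in (0:ℝ)..1, p t) * ψ x| ≤
      ε * Real.sqrt (∫ t in (0:ℝ)..1, (p t) ^ 2) *
        Real.sqrt (∫ x in (0:ℝ)..1, (derivWithin ψ (Set.Icc (0:ℝ) 1) x) ^ 2) := by
  have hNR : (0:ℝ) < N := Nat.cast_pos.mpr hN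
  have hε0 : 0 < ε := by rw [hε]; positivity
  have hNε : (N : ℝ) * ε = 1 := by rw [hε]; field_simp
  set c : ℝ := ∫ t in (0:ℝ)..1, p t with hc
  set g : ℝ → ℝ := fun x => p (x / ε) - c with hg
  have hgc : Continuous g := (hp.comp (continuous_id.div_const ε)).sub continuous_const
  have hPer : Function.Periodic p 1 := hper
  -- integral of p over 0..k
  have hpk : ∀ k : ℕ, (∫ t in (0:ℝ)..(k:ℝ), p t) = k * c := by
    intro k
    have := hPer.intervalIntegral_add_zsmul_eq (k : ℤ) 0
      (fun t₁ t₂ => hp.intervalIntegrable t₁ t₂)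
    simpa using this
  -- scaling
  have hscale : ∀ q : ℝ → ℝ, Continuous q → (∀ t, q (t + 1) = q t) →
      (∫ x in (0:ℝ)..1, q (x / ε)) = ∫ t in (0:ℝ)..1, q t := by
    intro q hq hqper
    rw [intervalIntegral.integral_comp_div q (ne_of_gt hε0)]
    have h1 : (1:ℝ) / ε = (N:ℝ) := by rw [hε]; field_simp
    have hqk := (show Function.Periodic q 1 from hqper).intervalIntegral_add_zsmul_eq (N : ℤ) 0
      (fun t₁ t₂ => hq.intervalIntegrable t₁ t₂)
    have hqk2 : (∫ x in (0:ℝ)..(N:ℝ), q x) = (N:ℝ) * ∫ x in (0:ℝ)..1, q x := by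
      simpa using hqk
    simp only [zero_div, h1]
    rw [hqk2, smul_eq_mul, ← mul_assoc, mul_comm ε, hNε, one_mul]
  -- F
  set F : ℝ → ℝ := fun x => ∫ t in (0:ℝ)..x, g t with hF
  have hFd : ∀ x : ℝ, HasDerivAt F (g x) x := by
    intro x
    exact intervalIntegral.integral_hasDerivAt_right (hgc.intervalIntegrable 0 x)
      (hgc.stronglyMeasurableAtFilter _ _) hgc.continuousAt
  have hFc : Continuous F := by
    have : Differentiable ℝ F := fun x => (hFd x).differentiableAt
    exact this.continuous
  -- F vanishes at multiples of ε
  have hFk : ∀ k : ℕ, F ((k:ℝ) * ε) = 0 := by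
    intro k
    have hsplit : F ((k:ℝ) * ε) = (∫ t in (0:ℝ)..((k:ℝ)*ε), p (t / ε)) - (k:ℝ)*ε*c := by
      show (∫ t in (0:ℝ)..((k:ℝ)*ε), (p (t / ε) - c)) = _
      rw [intervalIntegral.integral_sub
        ((by fun_prop : Continuous fun t : ℝ => p (t / ε)).intervalIntegrable _ _)
        (intervalIntegrable_const)]
      simp [mul_comm, mul_assoc]
    have hcomp : (∫ t in (0:ℝ)..((k:ℝ)*ε), p (t / ε)) = ε * ((k:ℝ) * c) := by
      rw [intervalIntegral.integral_comp_div p (ne_of_gt hε0)]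
      rw [zero_div, mul_div_assoc, div_self (ne_of_gt hε0), mul_one, hpk k, smul_eq_mul]
    rw [hsplit, hcomp]; ring
  have hF1 : F 1 = 0 := by
    have := hFk N; rwa [hNε] at this
  have hF0 : F 0 = 0 := by simp [hF]
  -- notation for derivWithin
  set ψd : ℝ → ℝ := derivWithin ψ (Set.Icc (0:ℝ) 1) with hψdd
  have hudiff : UniqueDiffOn ℝ (Icc (0:ℝ) 1) := uniqueDiffOn_Icc one_pos
  have hψdc : ContinuousOn ψd (Icc 0 1) := hψ.continuousOn_derivWithin hudiff le_rfl
  have huIcc : uIcc (0:ℝ) 1 = Icc 0 1 := uIcc_of_le zero_le_one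
  have hψcont : ContinuousOn ψ (Icc 0 1) := hψ.continuousOn
  have hψdiff : ∀ x ∈ Ioo (0:ℝ) 1, HasDerivAt ψ (ψd x) x := by
    intro x hx
    have hmem : Icc (0:ℝ) 1 ∈ nhds x := Icc_mem_nhds hx.1 hx.2
    have hd : DifferentiableWithinAt ℝ ψ (Icc 0 1) x :=
      (hψ.differentiableOn one_ne_zero) x (Ioo_subset_Icc_self hx)
    have hda : DifferentiableAt ℝ ψ x := hd.differentiableAt hmem
    have hrw : ψd x = deriv ψ x := derivWithin_of_mem_nhds hmem
    rw [hrw]; exact hda.hasDerivAt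
  -- integration by parts
  have hψdint : IntervalIntegrable ψd volume 0 1 :=
    ContinuousOn.intervalIntegrable (by rw [huIcc]; exact hψdc)
  have hibp := intervalIntegral.integral_deriv_mul_eq_sub_of_hasDerivAt
      (u := F) (v := ψ) (u' := g) (v' := ψd) (a := 0) (b := 1)
      (hFc.continuousOn) (by rw [huIcc]; exact hψcont)
      (by intro x hx; exact hFd x)
      (by intro x hx; exact hψdiff x (by simpa using hx))
      (hgc.intervalIntegrable _ _) hψdint
  have hFψd_int : IntervalIntegrable (fun x => F x * ψd x) volume 0 1 :=
    ContinuousOn.intervalIntegrable (by rw [huIcc]; exact hFc.continuousOn.mul hψdc)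
  have hgψ_int : IntervalIntegrable (fun x => g x * ψ x) volume 0 1 :=
    ContinuousOn.intervalIntegrable (by rw [huIcc]; exact hgc.continuousOn.mul hψcont)
  have hadd := intervalIntegral.integral_add hgψ_int hFψd_int
  have hkey : (∫ x in (0:ℝ)..1, g x * ψ x) = - ∫ x in (0:ℝ)..1, F x * ψd x := by
    have h0 : (∫ x in (0:ℝ)..1, (g x * ψ x + F x * ψd x)) = 0 := by
      rw [hibp, hF1, hF0]; ring
    rw [hadd] at h0; linarith
  -- partition bound : ∫ F² ≤ ε² ∫ g²
  have hg2int : ∀ u v : ℝ, IntervalIntegrable (fun t => g t ^ 2) volume u v :=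
    fun u v => (hgc.pow 2).intervalIntegrable u v
  have hF2int : ∀ u v : ℝ, IntervalIntegrable (fun t => F t ^ 2) volume u v :=
    fun u v => (hFc.pow 2).intervalIntegrable u v
  have hbound : (∫ x in (0:ℝ)..1, F x ^ 2) ≤ ε ^ 2 * ∫ x in (0:ℝ)..1, g x ^ 2 := by
    set a : ℕ → ℝ := fun k => (k : ℝ) * ε with ha
    have ha0 : a 0 = 0 := by simp [ha]
    have haN : a N = 1 := by simp [ha, hNε]
    have hsumF := intervalIntegral.sum_integral_adjacent_intervals
      (a := a) (n := N) (f := fun t => F t ^ 2) (fun k _ => hF2int _ _)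
    have hsumG := intervalIntegral.sum_integral_adjacent_intervals
      (a := a) (n := N) (f := fun t => g t ^ 2) (fun k _ => hg2int _ _)
    rw [ha0, haN] at hsumF hsumG
    rw [← hsumF, ← hsumG, Finset.mul_sum]
    apply Finset.sum_le_sum
    intro k hk
    have hstep : a k ≤ a (k + 1) := by
      simp only [ha]
      have : (k:ℝ) ≤ (k:ℝ) + 1 := by linarith
      push_cast
      nlinarith [hε0]
    have hlen : a (k + 1) - a k = ε := by simp [ha]; push_cast; ring
    set Ik : ℝ := ∫ t in (a k)..(a (k+1)), g t ^ 2 with hIk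
    have hIknn : 0 ≤ Ik := intervalIntegral.integral_nonneg hstep (fun x _ => sq_nonneg _)
    -- pointwise bound on F² on that interval
    have hpt : ∀ x ∈ Icc (a k) (a (k+1)), F x ^ 2 ≤ ε * Ik := by
      intro x hx
      have hax : a k ≤ x := hx.1
      have hxb : x ≤ a (k+1) := hx.2
      have hFx : F x = ∫ t in (a k)..x, g t := by
        have hadj := intervalIntegral.integral_add_adjacent_intervals (μ := volume)
          (hgc.intervalIntegrable 0 (a k)) (hgc.intervalIntegrable (a k) x)
        have hFak : F (a k) = 0 := hFk k
        have : F (a k) + (∫ t in (a k)..x, g t) = F x := hadj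
        rw [hFak] at this; linarith
      have hcs : |F x| ≤ Real.sqrt (∫ t in (a k)..x, g t ^ 2) *
          Real.sqrt (∫ t in (a k)..x, (1:ℝ) ^ 2) := by
        rw [hFx]
        have := cs_interval (f := g) (h := fun _ => (1:ℝ)) hax
          (hgc.continuousOn) (continuousOn_const)
        simpa using this
      have hone : (∫ t in (a k)..x, (1:ℝ) ^ 2) = x - a k := by simp
      have hmonoI : (∫ t in (a k)..x, g t ^ 2) ≤ Ik :=
        intervalIntegral.integral_mono_interval le_rfl hax hxb
          (Filter.Eventually.of_forall fun t => sq_nonneg _) (hg2int _ _)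
      have hInn : 0 ≤ (∫ t in (a k)..x, g t ^ 2) :=
        intervalIntegral.integral_nonneg hax (fun t _ => sq_nonneg _)
      have hxk : x - a k ≤ ε := by
        have := hlen; linarith
      have h1 : F x ^ 2 ≤ (∫ t in (a k)..x, g t ^ 2) * (x - a k) := by
        have habs : F x ^ 2 = |F x| ^ 2 := (sq_abs _).symm
        rw [habs]
        calc |F x| ^ 2 ≤ (Real.sqrt (∫ t in (a k)..x, g t ^ 2) *
              Real.sqrt (∫ t in (a k)..x, (1:ℝ) ^ 2)) ^ 2 := by
              apply pow_le_pow_left₀ (abs_nonneg _) hcs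
          _ = (∫ t in (a k)..x, g t ^ 2) * (x - a k) := by
              rw [mul_pow, Real.sq_sqrt hInn, Real.sq_sqrt (by rw [hone]; linarith), hone]
      calc F x ^ 2 ≤ (∫ t in (a k)..x, g t ^ 2) * (x - a k) := h1
        _ ≤ Ik * ε := by
            apply mul_le_mul hmonoI hxk (by linarith) hIknn
        _ = ε * Ik := mul_comm _ _
    have hmono := intervalIntegral.integral_mono_on hstep (hF2int _ _)
      (_root_.intervalIntegrable_const (c := ε * Ik) (μ := volume)) hpt
    calc (∫ x in (a k)..(a (k+1)), F x ^ 2) ≤ ∫ _x in (a k)..(a (k+1)), (ε * Ik) :=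
          hmono
      _ = (a (k+1) - a k) * (ε * Ik) := by rw [intervalIntegral.integral_const, smul_eq_mul]
      _ = ε ^ 2 * Ik := by rw [hlen]; ring
  -- ∫ g² ≤ ∫ p²
  have hg2le : (∫ x in (0:ℝ)..1, g x ^ 2) ≤ ∫ t in (0:ℝ)..1, p t ^ 2 := by
    have hq : (∫ x in (0:ℝ)..1, g x ^ 2) = ∫ t in (0:ℝ)..1, (p t - c) ^ 2 := by
      have := hscale (fun t => (p t - c) ^ 2) (by fun_prop) (fun t => by simp [hper])
      simpa [hg] using this
    have ia : IntervalIntegrable (fun t => p t ^ 2) volume 0 1 :=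
      (hp.pow 2).intervalIntegrable _ _
    have ib : IntervalIntegrable (fun t => (2 * c) * p t) volume 0 1 :=
      (continuous_const.mul hp).intervalIntegrable _ _
    have hexp : (∫ t in (0:ℝ)..1, (p t - c) ^ 2)
        = (∫ t in (0:ℝ)..1, p t ^ 2) - c ^ 2 := by
      have h1 : ∀ t : ℝ, (p t - c) ^ 2 = (p t ^ 2 - (2 * c) * p t) + c ^ 2 :=
        fun t => by ring
      rw [intervalIntegral.integral_congr (fun t _ => h1 t)]
      rw [intervalIntegral.integral_add (ia.sub ib) (_root_.intervalIntegrable_const (c := c ^ 2) (μ := volume))]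
      rw [intervalIntegral.integral_sub ia ib]
      rw [intervalIntegral.integral_const_mul, intervalIntegral.integral_const, ← hc]
      simp
      ring
    rw [hq, hexp]
    nlinarith [sq_nonneg c]
  -- assemble
  have hcs := cs_interval (f := F) (h := ψd) zero_le_one hFc.continuousOn hψdc
  have hF2nn : 0 ≤ (∫ x in (0:ℝ)..1, F x ^ 2) :=
    intervalIntegral.integral_nonneg zero_le_one (fun x _ => sq_nonneg _)
  have hp2nn : 0 ≤ (∫ t in (0:ℝ)..1, p t ^ 2) :=
    intervalIntegral.integral_nonneg zero_le_one (fun x _ => sq_nonneg _)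
  have hgoal : |∫ x in (0:ℝ)..1, g x * ψ x| ≤
      ε * Real.sqrt (∫ t in (0:ℝ)..1, p t ^ 2) * Real.sqrt (∫ x in (0:ℝ)..1, ψd x ^ 2) := by
    rw [hkey, abs_neg]
    refine hcs.trans ?_
    have hstep1 : Real.sqrt (∫ x in (0:ℝ)..1, F x ^ 2)
        ≤ ε * Real.sqrt (∫ t in (0:ℝ)..1, p t ^ 2) := by
      have h2 : (∫ x in (0:ℝ)..1, F x ^ 2) ≤ ε ^ 2 * ∫ t in (0:ℝ)..1, p t ^ 2 := by
        calc (∫ x in (0:ℝ)..1, F x ^ 2) ≤ ε ^ 2 * ∫ x in (0:ℝ)..1, g x ^ 2 := hbound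
          _ ≤ ε ^ 2 * ∫ t in (0:ℝ)..1, p t ^ 2 := by
              apply mul_le_mul_of_nonneg_left hg2le (sq_nonneg _)
      calc Real.sqrt (∫ x in (0:ℝ)..1, F x ^ 2)
          ≤ Real.sqrt (ε ^ 2 * ∫ t in (0:ℝ)..1, p t ^ 2) := Real.sqrt_le_sqrt h2
        _ = ε * Real.sqrt (∫ t in (0:ℝ)..1, p t ^ 2) := by
            rw [Real.sqrt_mul (sq_nonneg _), Real.sqrt_sq hε0.le]
    exact mul_le_mul_of_nonneg_right hstep1 (Real.sqrt_nonneg _)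
  show |∫ x in (0:ℝ)..1, g x * ψ x| ≤ _
  exact hgoal
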